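/- If (T₁,T₂) has the skewed bivariate BS distribution with parameters (α₁, α₂, β₁, β₂, λ), then (1/T₁, T₂) has the skewed bivariate BS distribution with parameters (α₁, α₂, 1/β₁, β₂, −λ); equivalently f(1/t₁, t₂; α₁,α₂,1/β₁,β₂,−λ)/t₁² = f(t₁,t₂; α₁,α₂,β₁,β₂,λ) for all t₁, t₂ > 0. -/

import Mathlib

open Real MeasureTheory

/-- Standard normal pdf. -/
noncomputable def phi (x : ℝ) : ℝ := (Real.sqrt (2 * Real.pi))⁻¹ * Real.exp (-x ^ 2 / 2)

/-- Standard normal cdf. -/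
noncomputable def Phi (x : ℝ) : ℝ := ∫ t in Set.Iic x, phi t

noncomputable def aj (a b t : ℝ) : ℝ := (1/a) * (Real.sqrt (t / b) - Real.sqrt (b / t))

/-- Skewed bivariate Birnbaum–Saunders density. -/
noncomputable def fSBVBS (a1 a2 b1 b2 l t1 t2 : ℝ) : ℝ :=
  2 * phi (aj a1 b1 t1) * phi (aj a2 b2 t2) * Phi (l * (aj a1 b1 t1) * (aj a2 b2 t2)) *
    (t1 ^ (-(3:ℝ)/2) * (t1 + b1) / (2 * a1 * Real.sqrt b1)) *
    (t2 ^ (-(3:ℝ)/2) * (t2 + b2) / (2 * a2 * Real.sqrt b2))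

lemma aj_inv (a b t : ℝ) (hb : 0 < b) (ht : 0 < t) :
    aj a (1/b) (1/t) = - aj a b t := by
  have h1 : (1/t) / (1/b) = b / t := by field_simp
  have h2 : (1/b) / (1/t) = t / b := by field_simp
  simp only [aj, h1, h2]; ring

lemma phi_neg (x : ℝ) : phi (-x) = phi x := by simp [phi]

theorem SBVBS_reciprocal_first (a1 a2 b1 b2 l t1 t2 : ℝ)
    (ha1 : 0 < a1) (ha2 : 0 < a2) (hb1 : 0 < b1) (hb2 : 0 < b2)
    (ht1 : 0 < t1) (ht2 : 0 < t2) :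
    fSBVBS a1 a2 (1 / b1) b2 (-l) (1 / t1) t2 / t1 ^ 2
      = fSBVBS a1 a2 b1 b2 l t1 t2 := by
  have haj := aj_inv a1 b1 t1 hb1 ht1
  have hPhi : (-l) * aj a1 (1/b1) (1/t1) * aj a2 b2 t2
      = l * aj a1 b1 t1 * aj a2 b2 t2 := by rw [haj]; ring
  have hjac : (1/t1) ^ (-(3:ℝ)/2) * (1/t1 + 1/b1) / (2 * a1 * Real.sqrt (1/b1)) / t1 ^ 2
      = t1 ^ (-(3:ℝ)/2) * (t1 + b1) / (2 * a1 * Real.sqrt b1) := by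
    have hs : Real.sqrt (1/b1) = 1 / Real.sqrt b1 := by
      rw [one_div, one_div, Real.sqrt_inv]
    have h1 : (1/t1 : ℝ) ^ (-(3:ℝ)/2) = t1 ^ ((3:ℝ)/2) := by
      rw [one_div, Real.inv_rpow ht1.le, ← Real.rpow_neg ht1.le]
      norm_num
    have h2 : t1 ^ ((3:ℝ)/2) = t1 ^ (-(3:ℝ)/2) * t1 ^ (3:ℕ) := by
      rw [← Real.rpow_natCast t1 3, ← Real.rpow_add ht1]
      norm_num
    rw [h1, hs, h2]
    have hsb : Real.sqrt b1 ≠ 0 := (Real.sqrt_pos.mpr hb1).ne'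
    field_simp
    ring_nf
    rw [Real.sq_sqrt hb1.le]
    ring
  simp only [fSBVBS, hPhi, haj, phi_neg, div_eq_iff (pow_ne_zero 2 ht1.ne'),
    ← hjac]
  field_simp
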